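/- arXiv:2408.13547 — 7 statements merged into one kernel-verified Lean document; each statement's English description precedes it below -/
import Mathlib

section
/- In the matrix FSD setup, for every integer t ≥ 0 the approximation error satisfies E(t+1) ≤ κ · E(t) + α · μ · ∑_{i=1}^{n−1} E(t−i). (Lemma C.1 of the paper: the error at iteration t+1 is bounded by a linear combination of the errors from the previous n iterations, with coefficients κ and αμ.) -/
open Matrix Finset Filter

noncomputable def frobNorm {m k : ℕ} (A : Matrix (Fin m) (Fin k) ℝ) : ℝ :=
  Real.sqrt (∑ i, ∑ j, (A i j) ^ 2)

noncomputable def specNorm {m k : ℕ} (A : Matrix (Fin m) (Fin k) ℝ) : ℝ :=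
  ‖LinearMap.toContinuousLinearMap (Matrix.toEuclideanLin A)‖

def idx (n : ℕ) (hn : 0 < n) (a : ℤ) : Fin n :=
  ⟨(a % (n : ℤ)).toNat, by
    have h1 : (0 : ℤ) < (n : ℤ) := by exact_mod_cast hn
    have h2 := Int.emod_nonneg a h1.ne'
    have h3 := Int.emod_lt_of_pos a h1
    omega⟩

noncomputable def kappaFSD {n N K : ℕ} (hn : 0 < n) (α : ℝ)
    (M : Fin n → Matrix (Fin N) (Fin K) ℝ) : ℝ :=
  Finset.univ.sup' (Finset.univ_nonempty_iff.mpr ⟨⟨0, hn⟩⟩)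
    fun i => specNorm ((1 : Matrix (Fin K) (Fin K) ℝ) - α • ((M i)ᵀ * M i))

noncomputable def muFSD {n N K : ℕ} (hn : 2 ≤ n)
    (M : Fin n → Matrix (Fin N) (Fin K) ℝ) : ℝ :=
  ((Finset.univ : Finset (Fin n × Fin n)).filter fun p => p.1 ≠ p.2).sup'
    ⟨(⟨0, by omega⟩, ⟨1, by omega⟩), by
      refine Finset.mem_filter.mpr ⟨Finset.mem_univ _, ?_⟩
      simp [Fin.ext_iff]⟩
    fun p => specNorm ((M p.1)ᵀ * M p.2)

noncomputable def toE {m k : ℕ} :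
    Matrix (Fin m) (Fin k) ℝ →ₗ[ℝ] EuclideanSpace ℝ (Fin m × Fin k) where
  toFun A := (WithLp.equiv 2 _).symm (fun p => A p.1 p.2)
  map_add' _ _ := rfl
  map_smul' _ _ := rfl

lemma frobNorm_eq {m k : ℕ} (A : Matrix (Fin m) (Fin k) ℝ) :
    frobNorm A = ‖toE A‖ := by
  rw [EuclideanSpace.norm_eq]
  simp [frobNorm, toE, Fintype.sum_prod_type, Real.norm_eq_abs, sq_abs]

lemma frobNorm_nonneg {m k : ℕ} (A : Matrix (Fin m) (Fin k) ℝ) : 0 ≤ frobNorm A :=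
  Real.sqrt_nonneg _

lemma frobNorm_sub_le {m k : ℕ} (A B : Matrix (Fin m) (Fin k) ℝ) :
    frobNorm (A - B) ≤ frobNorm A + frobNorm B := by
  rw [frobNorm_eq, frobNorm_eq, frobNorm_eq,
    show toE (A - B) = toE A - toE B from map_sub _ _ _]
  exact norm_sub_le _ _

lemma frobNorm_smul {m k : ℕ} (c : ℝ) (A : Matrix (Fin m) (Fin k) ℝ) :
    frobNorm (c • A) = |c| * frobNorm A := by
  rw [frobNorm_eq, frobNorm_eq, show toE (c • A) = c • toE A from map_smul _ _ _, norm_smul, Real.norm_eq_abs]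

lemma frobNorm_sum_le {m k : ℕ} {ι : Type*} (s : Finset ι)
    (f : ι → Matrix (Fin m) (Fin k) ℝ) :
    frobNorm (∑ i ∈ s, f i) ≤ ∑ i ∈ s, frobNorm (f i) := by
  rw [frobNorm_eq, map_sum]
  refine (norm_sum_le _ _).trans ?_
  exact le_of_eq (by simp [frobNorm_eq])

lemma frobNorm_mul_le {m k p : ℕ} (A : Matrix (Fin m) (Fin k) ℝ)
    (B : Matrix (Fin k) (Fin p) ℝ) :
    frobNorm (A * B) ≤ specNorm A * frobNorm B := by
  set L := LinearMap.toContinuousLinearMap (Matrix.toEuclideanLin A) with hL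
  have hcol : ∀ j : Fin p,
      ∑ i, ((A * B) i j) ^ 2 = ‖L ((WithLp.equiv 2 _).symm (fun i => B i j))‖ ^ 2 := by
    intro j
    rw [EuclideanSpace.norm_eq, Real.sq_sqrt (by positivity)]
    refine Finset.sum_congr rfl fun i _ => ?_
    simp [hL, Matrix.toEuclideanLin_apply, Matrix.mulVec, Matrix.mul_apply,
      dotProduct, Real.norm_eq_abs, sq_abs]
  have h1 : frobNorm (A * B) = Real.sqrt (∑ j, ‖L ((WithLp.equiv 2 _).symm (fun i => B i j))‖ ^ 2) := by
    rw [frobNorm, Finset.sum_comm]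
    congr 1
    exact Finset.sum_congr rfl fun j _ => hcol j
  have h2 : frobNorm B = Real.sqrt (∑ j, ‖((WithLp.equiv 2 (Fin k → ℝ)).symm (fun i => B i j) : EuclideanSpace ℝ (Fin k))‖ ^ 2) := by
    rw [frobNorm, Finset.sum_comm]
    congr 1
    refine Finset.sum_congr rfl fun j _ => ?_
    rw [EuclideanSpace.norm_eq, Real.sq_sqrt (by positivity)]
    refine Finset.sum_congr rfl fun i _ => by simp [Real.norm_eq_abs, sq_abs]
  rw [h1, h2, specNorm, ← hL]
  rw [← Real.sqrt_sq (norm_nonneg L), ← Real.sqrt_mul (by positivity)]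
  refine Real.sqrt_le_sqrt ?_
  rw [Finset.mul_sum]
  refine Finset.sum_le_sum fun j _ => ?_
  have := L.le_opNorm ((WithLp.equiv 2 (Fin k → ℝ)).symm (fun i => B i j))
  calc ‖L _‖ ^ 2 ≤ (‖L‖ * ‖_‖) ^ 2 := by
        exact pow_le_pow_left₀ (norm_nonneg _) this 2
    _ = ‖L‖ ^ 2 * ‖_‖ ^ 2 := by ring

lemma idx_eq_iff {n : ℕ} (hn : 0 < n) (a b : ℤ) :
    idx n hn a = idx n hn b ↔ (n : ℤ) ∣ (a - b) := by
  have h1 : (0 : ℤ) < n := by exact_mod_cast hn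
  simp only [idx, Fin.mk.injEq]
  constructor
  · intro h
    have ha := Int.emod_nonneg a h1.ne'
    have hb := Int.emod_nonneg b h1.ne'
    have hab : a % n = b % n := by omega
    exact Int.dvd_of_emod_eq_zero (Int.emod_eq_emod_iff_emod_sub_eq_zero.mp hab)
  · intro h
    have hab : a % n = b % n :=
      Int.emod_eq_emod_iff_emod_sub_eq_zero.mpr (Int.emod_eq_zero_of_dvd h)
    rw [hab]

lemma idx_bij {n : ℕ} (hn : 0 < n) (t : ℤ) :
    Function.Bijective (fun i : Fin n => idx n hn (t - ((i : ℕ) : ℤ))) := by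
  rw [Fintype.bijective_iff_injective_and_card]
  refine ⟨fun i j h => ?_, rfl⟩
  have hd : (n : ℤ) ∣ ((t - (i : ℕ)) - (t - (j : ℕ))) := (idx_eq_iff hn _ _).mp h
  have hd2 : (n : ℤ) ∣ ((j : ℕ) : ℤ) - ((i : ℕ) : ℤ) := by
    have : ((t - (i : ℕ)) - (t - (j : ℕ))) = ((j : ℕ) : ℤ) - ((i : ℕ) : ℤ) := by ring
    rwa [this] at hd
  obtain ⟨c, hc⟩ := hd2
  have hi := i.isLt
  have hj := j.isLt
  have hi' : ((i : ℕ) : ℤ) < n := by exact_mod_cast hi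
  have hj' : ((j : ℕ) : ℤ) < n := by exact_mod_cast hj
  have hiz : (0 : ℤ) ≤ ((i : ℕ) : ℤ) := Int.natCast_nonneg _
  have hjz : (0 : ℤ) ≤ ((j : ℕ) : ℤ) := Int.natCast_nonneg _
  have hnz : (0 : ℤ) < n := by exact_mod_cast hn
  have hc1 : c < 1 := by
    have : (n : ℤ) * c < n * 1 := by omega
    exact lt_of_mul_lt_mul_left this hnz.le
  have hc2 : -1 < c := by
    have : (n : ℤ) * (-1) < n * c := by omega
    exact lt_of_mul_lt_mul_left this hnz.le
  have : c = 0 := by omega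
  rw [this, mul_zero] at hc
  exact Fin.ext (by omega)

lemma idx_ne_of_ne_zero {n : ℕ} (hn : 0 < n) (t : ℤ) (i : Fin n) (hi : (i : ℕ) ≠ 0) :
    idx n hn (t - ((i : ℕ) : ℤ)) ≠ idx n hn t := by
  intro h
  have hd : (n : ℤ) ∣ ((t - (i : ℕ)) - t) := (idx_eq_iff hn _ _).mp h
  have hd2 : (n : ℤ) ∣ ((i : ℕ) : ℤ) := by
    have : ((t - (i : ℕ)) - t) = -((i : ℕ) : ℤ) := by ring
    rw [this] at hd
    exact (dvd_neg.mp hd)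
  have hd3 : n ∣ (i : ℕ) := by exact_mod_cast hd2
  have := Nat.le_of_dvd (Nat.pos_of_ne_zero hi) hd3
  omega

theorem fsd_error_one_step_bound
    {n N K P : ℕ} (hn : 2 ≤ n) (hN : 1 ≤ N) (hK : 1 ≤ K) (hP : 1 ≤ P)
    (M : Fin n → Matrix (Fin N) (Fin K) ℝ)
    (Xstar : Matrix (Fin K) (Fin P) ℝ)
    (B : Matrix (Fin N) (Fin P) ℝ) (hB : B = (∑ i, M i) * Xstar)
    (α : ℝ) (hα : 0 < α)
    (X : ℤ → Matrix (Fin K) (Fin P) ℝ) (R : ℤ → Matrix (Fin N) (Fin P) ℝ)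
    (hX0 : ∀ t : ℤ, t ≤ 0 → X t = 0)
    (hR : ∀ t : ℤ, 0 ≤ t →
      R (t + 1) = B - ∑ i : Fin n, M (idx n (by omega) (t - ((i : ℕ) : ℤ))) * X (t - ((i : ℕ) : ℤ)))
    (hXstep : ∀ t : ℤ, 0 ≤ t →
      X (t + 1) = X t + α • ((M (idx n (by omega) t))ᵀ * R (t + 1))) :
    ∀ t : ℤ, 0 ≤ t →
      frobNorm (X (t + 1) - Xstar) ≤
        kappaFSD (show 0 < n by omega) α M * frobNorm (X t - Xstar) +
          α * muFSD hn M * ∑ i ∈ Finset.Icc 1 (n - 1), frobNorm (X (t - (i : ℤ)) - Xstar) := by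
  intro t ht
  have hn0 : 0 < n := by omega
  set j : Fin n := idx n hn0 t with hj
  set f : Fin n → Fin n := fun i => idx n hn0 (t - ((i : ℕ) : ℤ)) with hf
  have hsum : (∑ i, M i) * Xstar = ∑ i : Fin n, M (f i) * Xstar := by
    rw [Matrix.sum_mul]
    exact ((idx_bij hn0 t).sum_comp fun l => M l * Xstar).symm
  have hR' : R (t + 1)
      = B - ∑ i : Fin n, M (f i) * X (t - ((i : ℕ) : ℤ)) := hR t ht
  have hXstep' : X (t + 1) = X t + α • ((M j)ᵀ * R (t + 1)) := hXstep t ht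
  have hRs : R (t + 1) = -∑ i : Fin n, M (f i) * (X (t - ((i : ℕ) : ℤ)) - Xstar) := by
    rw [hR', hB, hsum]
    simp only [Matrix.mul_sub, Finset.sum_sub_distrib, neg_sub]
  have h00 : f (⟨0, hn0⟩ : Fin n) = j := by
    show idx n hn0 (t - ((0 : ℕ) : ℤ)) = idx n hn0 t
    norm_num
  have key : X (t + 1) - Xstar =
      (1 - α • ((M j)ᵀ * M j)) * (X t - Xstar) -
        α • ∑ i ∈ Finset.univ.erase (⟨0, hn0⟩ : Fin n),
          ((M j)ᵀ * M (f i)) * (X (t - ((i : ℕ) : ℤ)) - Xstar) := by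
    rw [hXstep', hRs,
      ← Finset.sum_erase_add _ _ (Finset.mem_univ (⟨0, hn0⟩ : Fin n))]
    have h0t : t - (((⟨0, hn0⟩ : Fin n) : ℕ) : ℤ) = t := by norm_num
    rw [h00, h0t]
    simp only [Matrix.mul_neg, Matrix.mul_add, Matrix.mul_sub, Matrix.sub_mul,
      Matrix.one_mul, Matrix.mul_sum, smul_neg, smul_add, smul_sub,
      Matrix.smul_mul, Matrix.mul_assoc]
    abel
  have himg : (Finset.univ.erase (⟨0, hn0⟩ : Fin n)).image Fin.val
      = Finset.Icc 1 (n - 1) := by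
    ext m
    simp only [Finset.mem_image, Finset.mem_erase, Finset.mem_univ, and_true,
      Finset.mem_Icc, Fin.ext_iff, Fin.val_mk]
    constructor
    · rintro ⟨a, ha, rfl⟩
      have h1 := a.isLt
      have h3 : (a : ℕ) ≠ 0 := fun h => ha (Fin.ext (by simp [h]))
      omega
    · intro hm
      refine ⟨⟨m, by omega⟩, ?_, rfl⟩
      intro h
      have : m = 0 := by simpa [Fin.ext_iff] using h
      omega
  have hsum2 : ∑ i ∈ Finset.Icc 1 (n - 1), frobNorm (X (t - (i : ℤ)) - Xstar)
      = ∑ i ∈ Finset.univ.erase (⟨0, hn0⟩ : Fin n),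
          frobNorm (X (t - ((i : ℕ) : ℤ)) - Xstar) := by
    rw [← himg, Finset.sum_image (fun a _ b _ h => Fin.ext h)]
  have hpart1 : frobNorm ((1 - α • ((M j)ᵀ * M j)) * (X t - Xstar))
      ≤ kappaFSD hn0 α M * frobNorm (X t - Xstar) := by
    refine (frobNorm_mul_le _ _).trans
      (mul_le_mul_of_nonneg_right ?_ (frobNorm_nonneg _))
    exact Finset.le_sup' (fun i => specNorm ((1 : Matrix (Fin K) (Fin K) ℝ) - α • ((M i)ᵀ * M i)))
      (Finset.mem_univ j)
  have hterm : ∀ i ∈ Finset.univ.erase (⟨0, hn0⟩ : Fin n),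
      frobNorm (((M j)ᵀ * M (f i)) * (X (t - ((i : ℕ) : ℤ)) - Xstar))
        ≤ muFSD hn M * frobNorm (X (t - ((i : ℕ) : ℤ)) - Xstar) := by
    intro i hi
    refine (frobNorm_mul_le _ _).trans
      (mul_le_mul_of_nonneg_right ?_ (frobNorm_nonneg _))
    have hival : (i : ℕ) ≠ 0 := by
      have := Finset.mem_erase.mp hi
      intro h0
      exact this.1 (Fin.ext (by simpa using h0))
    have hne : j ≠ f i := (idx_ne_of_ne_zero hn0 t i hival).symm
    refine Finset.le_sup'
      (f := fun p : Fin n × Fin n => specNorm ((M p.1)ᵀ * M p.2))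
      (b := (j, f i)) ?_
    exact Finset.mem_filter.mpr ⟨Finset.mem_univ _, hne⟩
  have hpart2 : frobNorm (α • ∑ i ∈ Finset.univ.erase (⟨0, hn0⟩ : Fin n),
        ((M j)ᵀ * M (f i)) * (X (t - ((i : ℕ) : ℤ)) - Xstar))
      ≤ α * muFSD hn M * ∑ i ∈ Finset.Icc 1 (n - 1), frobNorm (X (t - (i : ℤ)) - Xstar) := by
    rw [frobNorm_smul, abs_of_pos hα, hsum2, mul_assoc]
    refine mul_le_mul_of_nonneg_left ?_ hα.le
    refine (frobNorm_sum_le _ _).trans ?_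
    rw [Finset.mul_sum]
    exact Finset.sum_le_sum hterm
  calc frobNorm (X (t + 1) - Xstar)
      ≤ frobNorm ((1 - α • ((M j)ᵀ * M j)) * (X t - Xstar)) +
          frobNorm (α • ∑ i ∈ Finset.univ.erase (⟨0, hn0⟩ : Fin n),
            ((M j)ᵀ * M (f i)) * (X (t - ((i : ℕ) : ℤ)) - Xstar)) := by
        rw [key]; exact frobNorm_sub_le _ _
    _ ≤ kappaFSD hn0 α M * frobNorm (X t - Xstar) +
          α * muFSD hn M * ∑ i ∈ Finset.Icc 1 (n - 1), frobNorm (X (t - (i : ℤ)) - Xstar) :=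
        add_le_add hpart1 hpart2
end

section
/- (Lemma C.2 of the paper.) If E : ℤ → ℝ is an FSD error sequence for parameters n, κ, μ, α, then for every integer t ≥ 1 the approximation error is bounded by E(t) ≤ ε_t · E(0), where ε_t is the recursively defined bounding coefficient. -/
open Matrix Finset Filter

theorem fsd_error_bounded_by_eps
    (n : ℕ) (hn : 2 ≤ n) (κ μ α : ℝ) (hκ : 0 ≤ κ) (hμ : 0 ≤ μ) (hα : 0 ≤ α)
    (ε : ℤ → ℝ)
    (hε0 : ∀ t : ℤ, t ≤ 0 → ε t = 1)
    (hεrec : ∀ t : ℤ, 1 ≤ t →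
      ε t = κ ^ t.toNat + α * μ * ∑ j ∈ Finset.range t.toNat, κ ^ j *
          ∑ i ∈ Finset.Icc 1 (n - 1), ε (t - 1 - (j : ℤ) - (i : ℤ)))
    (E : ℤ → ℝ) (hEnn : ∀ t : ℤ, 0 ≤ E t) (hEneg : ∀ t : ℤ, t ≤ 0 → E t = E 0)
    (hErec : ∀ t : ℤ, 0 ≤ t →
      E (t + 1) ≤ κ * E t + α * μ * ∑ i ∈ Finset.Icc 1 (n - 1), E (t - (i : ℤ))) :
    ∀ t : ℤ, 1 ≤ t → E t ≤ ε t * E 0 := by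
  have hstep : ∀ s : ℤ, 0 ≤ s →
      ε (s + 1) = κ * ε s + α * μ * ∑ i ∈ Finset.Icc 1 (n - 1), ε (s - (i : ℤ)) := by
    intro s hs
    rcases eq_or_lt_of_le hs with h0 | h1
    · subst h0
      rw [show (0:ℤ)+1 = 1 from rfl, hεrec 1 (by norm_num)]
      have : (1:ℤ).toNat = 1 := rfl
      rw [this, Finset.sum_range_one, hε0 0 le_rfl]
      have h1 : ∀ i ∈ Finset.Icc 1 (n-1), ε (1 - 1 - (0:ℕ) - (i:ℤ)) = 1 := by
        intro i hi
        simp only [Finset.mem_Icc] at hi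
        exact hε0 _ (by push_cast; omega)
      have h2 : ∀ i ∈ Finset.Icc 1 (n-1), ε ((0:ℤ) - (i:ℤ)) = 1 := by
        intro i hi
        simp only [Finset.mem_Icc] at hi
        exact hε0 _ (by push_cast; omega)
      rw [Finset.sum_congr rfl h1, Finset.sum_congr rfl h2]
      ring
    · have h1' : (1:ℤ) ≤ s := h1
      rw [hεrec (s+1) (by omega), hεrec s h1']
      have ht : (s+1).toNat = s.toNat + 1 := by omega
      rw [ht, Finset.sum_range_succ']
      have hre : ∀ j ∈ Finset.range s.toNat,
          κ ^ (j+1) * ∑ i ∈ Finset.Icc 1 (n-1), ε (s + 1 - 1 - ((j:ℤ)+1) - (i:ℤ))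
          = κ * (κ ^ j * ∑ i ∈ Finset.Icc 1 (n-1), ε (s - 1 - (j:ℤ) - (i:ℤ))) := by
        intro j hj
        have : ∀ i ∈ Finset.Icc 1 (n-1), ε (s + 1 - 1 - ((j:ℤ)+1) - (i:ℤ))
            = ε (s - 1 - (j:ℤ) - (i:ℤ)) := by
          intro i hi; congr 1; ring
        rw [Finset.sum_congr rfl this]; ring
      have hcast : ∀ j ∈ Finset.range s.toNat,
          κ ^ (j+1) * ∑ i ∈ Finset.Icc 1 (n-1), ε (s + 1 - 1 - ((j+1:ℕ):ℤ) - (i:ℤ))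
          = κ * (κ ^ j * ∑ i ∈ Finset.Icc 1 (n-1), ε (s - 1 - (j:ℤ) - (i:ℤ))) := by
        intro j hj
        have := hre j hj
        push_cast
        push_cast at this
        convert this using 3
      rw [Finset.sum_congr rfl hcast, ← Finset.mul_sum]
      have hsum0 : ∀ i ∈ Finset.Icc 1 (n-1),
          ε (s + 1 - 1 - ((0:ℕ):ℤ) - (i:ℤ)) = ε (s - (i:ℤ)) := by
        intro i hi; congr 1; push_cast; ring
      rw [Finset.sum_congr rfl hsum0]
      ring
  have key : ∀ N : ℕ, ∀ t : ℤ, t ≤ N → E t ≤ ε t * E 0 := by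
    intro N
    induction N with
    | zero =>
      intro t ht
      push_cast at ht
      rw [hε0 t ht, hEneg t ht, one_mul]
    | succ N ih =>
      intro t ht
      rcases le_or_gt t N with h | h
      · exact ih t h
      · have ht' : t = (N:ℤ) + 1 := by push_cast at ht; omega
        subst ht'
        have hE := hErec N (by positivity)
        rw [hstep N (by positivity)]
        have hαμ : 0 ≤ α * μ := by positivity
        calc E ((N:ℤ)+1) ≤ κ * E N + α*μ * ∑ i ∈ Finset.Icc 1 (n-1), E ((N:ℤ) - (i:ℤ)) := hE
          _ ≤ κ * (ε N * E 0) + α*μ * ∑ i ∈ Finset.Icc 1 (n-1), ε ((N:ℤ) - (i:ℤ)) * E 0 := by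
              gcongr with i hi
              · exact ih N le_rfl
              · simp only [Finset.mem_Icc] at hi
                exact ih _ (by omega)
          _ = (κ * ε N + α*μ * ∑ i ∈ Finset.Icc 1 (n-1), ε ((N:ℤ) - (i:ℤ))) * E 0 := by
              rw [← Finset.sum_mul]; ring
  intro t ht
  exact key t.toNat t (by omega)
end

section
/- (Lemma C.3 of the paper.) Suppose in addition that 0 < κ and κ + α·μ·(n−1) < 1. Then the sequence of bounding coefficients is strictly decreasing: ε_{t+1} < ε_t for every integer t ≥ 0. -/
open Matrix Finset Filter

theorem eps_strictly_decreasing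
    (n : ℕ) (hn : 2 ≤ n) (κ μ α : ℝ) (hκ : 0 ≤ κ) (hμ : 0 ≤ μ) (hα : 0 ≤ α)
    (hκpos : 0 < κ) (hrate : κ + α * μ * ((n : ℝ) - 1) < 1)
    (ε : ℤ → ℝ)
    (hε0 : ∀ t : ℤ, t ≤ 0 → ε t = 1)
    (hεrec : ∀ t : ℤ, 1 ≤ t →
      ε t = κ ^ t.toNat + α * μ * ∑ j ∈ Finset.range t.toNat, κ ^ j *
          ∑ i ∈ Finset.Icc 1 (n - 1), ε (t - 1 - (j : ℤ) - (i : ℤ))) :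
    ∀ t : ℤ, 0 ≤ t → ε (t + 1) < ε t := by
  -- one-step recursion
  have hrec : ∀ m : ℕ, ε ((m:ℤ)+1) =
      κ * ε m + α * μ * ∑ i ∈ Finset.Icc 1 (n-1), ε ((m:ℤ) - i) := by
    intro m
    have h := hεrec ((m:ℤ)+1) (by omega)
    have htn : (((m:ℤ)+1)).toNat = m + 1 := by omega
    rw [htn, Finset.sum_range_succ'] at h
    simp only [pow_zero, one_mul, Nat.cast_zero, Nat.cast_add, Nat.cast_one, pow_succ] at h
    have e1 : ∀ x x1 : ℕ, ((m:ℤ) + 1 - 1 - ((x:ℤ) + 1) - (x1:ℤ)) = (m:ℤ) - 1 - x - x1 := by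
      intros; ring
    have e2 : ∀ x : ℕ, ((m:ℤ) + 1 - 1 - 0 - (x:ℤ)) = (m:ℤ) - x := by intros; ring
    simp only [e1, e2] at h
    rcases m with _ | k
    · simp only [Nat.cast_zero, Finset.range_zero, Finset.sum_empty, zero_add, pow_zero,
        one_mul] at h ⊢
      rw [h, hε0 0 le_rfl]; ring
    · have h2 := hεrec (↑(k+1)) (by exact_mod_cast Nat.succ_le_succ (Nat.zero_le k))
      rw [Int.toNat_natCast] at h2
      have hsum : ∑ x ∈ Finset.range (k+1), κ ^ x * κ *
            ∑ x1 ∈ Finset.Icc 1 (n-1), ε ((↑(k+1):ℤ) - 1 - x - x1)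
          = κ * ∑ x ∈ Finset.range (k+1), κ ^ x *
            ∑ x1 ∈ Finset.Icc 1 (n-1), ε ((↑(k+1):ℤ) - 1 - x - x1) := by
        rw [Finset.mul_sum]; exact Finset.sum_congr rfl (fun x _ => by ring)
      rw [hsum] at h
      rw [h, h2]; ring
  -- key: for every m : ℕ, ε (m+1) < ε m, by strong induction
  have key : ∀ m : ℕ, ε ((m:ℤ)+1) < ε (m:ℤ) := by
    intro m
    induction m using Nat.strong_induction_on with
    | _ m ih =>
      rcases m with _ | k
      · -- base case
        have h := hrec 0
        have hsum : ∑ i ∈ Finset.Icc 1 (n-1), ε ((0:ℤ) - i) = (n:ℝ) - 1 := by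
          rw [Finset.sum_congr rfl (fun i hi => hε0 _ (by
            simp only [Finset.mem_Icc] at hi; omega))]
          rw [Finset.sum_const, Nat.card_Icc, nsmul_eq_mul, mul_one]
          have h11 : n - 1 + 1 - 1 = n - 1 := by omega
          rw [h11]
          push_cast [show 1 ≤ n by omega]
          ring
        simp only [Nat.cast_zero] at h ⊢
        rw [h, hsum, hε0 0 le_rfl]
        linarith
      · -- inductive step: m = k+1
        have h1 := hrec (k+1)
        have h2 := hrec k
        have hk : ε ((k:ℤ)+1) < ε (k:ℤ) := ih k (by omega)
        have hcast : ((k+1:ℕ):ℤ) = (k:ℤ) + 1 := by push_cast; ring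
        rw [hcast] at h1 ⊢
        rw [h1, h2]
        have hterm : ∀ i ∈ Finset.Icc 1 (n-1), ε ((k:ℤ) + 1 - i) ≤ ε ((k:ℤ) - i) := by
          intro i hi
          simp only [Finset.mem_Icc] at hi
          by_cases hle : (k:ℤ) + 1 - i ≤ 0
          · rw [hε0 _ hle, hε0 _ (by omega)]
          · -- k + 1 - i ≥ 1, so k - i ≥ 0; set j = k - i as a natural
            have hj : ∃ j : ℕ, (k:ℤ) - i = (j:ℤ) := ⟨((k:ℤ) - i).toNat, by omega⟩
            obtain ⟨j, hjeq⟩ := hj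
            have : (k:ℤ) + 1 - i = (j:ℤ) + 1 := by omega
            rw [this, hjeq]
            exact le_of_lt (ih j (by omega))
        have hsumle : ∑ i ∈ Finset.Icc 1 (n-1), ε ((k:ℤ) + 1 - i)
            ≤ ∑ i ∈ Finset.Icc 1 (n-1), ε ((k:ℤ) - i) := Finset.sum_le_sum hterm
        have hαμ : 0 ≤ α * μ := mul_nonneg hα hμ
        nlinarith [mul_le_mul_of_nonneg_left hsumle hαμ,
          mul_lt_mul_of_pos_left hk hκpos]
  intro t ht
  have : ∃ m : ℕ, t = (m:ℤ) := ⟨t.toNat, by omega⟩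
  obtain ⟨m, rfl⟩ := this
  exact key m
end

section
/- (Theorem 4.1 of the paper, abstract sequence form.) Suppose κ + α·μ·(n−1) < 1. Then the bounding coefficients converge to zero, lim_{t→∞} ε_t = 0, and consequently every FSD error sequence E for parameters n, κ, μ, α satisfies lim_{t→∞} E(t) = 0. -/
open Matrix Finset Filter

theorem eps_and_error_tendsto_zero
    (n : ℕ) (hn : 2 ≤ n) (κ μ α : ℝ) (hκ : 0 ≤ κ) (hμ : 0 ≤ μ) (hα : 0 ≤ α)
    (hrate : κ + α * μ * ((n : ℝ) - 1) < 1)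
    (ε : ℤ → ℝ)
    (hε0 : ∀ t : ℤ, t ≤ 0 → ε t = 1)
    (hεrec : ∀ t : ℤ, 1 ≤ t →
      ε t = κ ^ t.toNat + α * μ * ∑ j ∈ Finset.range t.toNat, κ ^ j *
          ∑ i ∈ Finset.Icc 1 (n - 1), ε (t - 1 - (j : ℤ) - (i : ℤ))) :
    Filter.Tendsto (fun t : ℕ => ε (t : ℤ)) Filter.atTop (nhds 0) ∧
      ∀ E : ℤ → ℝ, (∀ t : ℤ, 0 ≤ E t) → (∀ t : ℤ, t ≤ 0 → E t = E 0) →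
        (∀ t : ℤ, 0 ≤ t →
          E (t + 1) ≤ κ * E t + α * μ * ∑ i ∈ Finset.Icc 1 (n - 1), E (t - (i : ℤ))) →
        Filter.Tendsto (fun t : ℕ => E (t : ℤ)) Filter.atTop (nhds 0) := by
  have hn1 : (1:ℝ) ≤ (n:ℝ) := by exact_mod_cast Nat.one_le_of_lt hn
  set ρ : ℝ := κ + α * μ * ((n : ℝ) - 1) with hρdef
  have hρ0 : 0 ≤ ρ := by
    have : 0 ≤ α * μ * ((n:ℝ) - 1) := mul_nonneg (mul_nonneg hα hμ) (by linarith)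
    linarith
  have hρ1 : ρ < 1 := hrate
  -- one-step recursion
  have hstep : ∀ t : ℤ, 0 ≤ t →
      ε (t + 1) = κ * ε t + α * μ * ∑ i ∈ Finset.Icc 1 (n - 1), ε (t - (i : ℤ)) := by
    intro t ht
    rcases eq_or_lt_of_le ht with h0 | h1
    · subst h0
      rw [show (0:ℤ) + 1 = 1 by norm_num, hεrec 1 le_rfl, hε0 0 le_rfl]
      norm_num
    · -- t ≥ 1
      have hm : ((t + 1 : ℤ)).toNat = t.toNat + 1 := by omega
      rw [hεrec (t + 1) (by omega), hεrec t h1, hm, Finset.sum_range_succ']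
      have hcong : ∀ j ∈ Finset.range t.toNat,
          κ ^ (j + 1) * ∑ i ∈ Finset.Icc 1 (n - 1), ε (t + 1 - 1 - ((j:ℕ) + 1 : ℕ) - (i:ℤ))
          = κ * (κ ^ j * ∑ i ∈ Finset.Icc 1 (n - 1), ε (t - 1 - (j:ℤ) - (i:ℤ))) := by
        intro j _
        rw [pow_succ]
        have harg : ∀ i : ℕ, t + 1 - 1 - ((j:ℕ) + 1 : ℕ) - (i:ℤ) = t - 1 - (j:ℤ) - (i:ℤ) := by
          intro i; push_cast; ring
        simp only [harg]
        ring
      rw [Finset.sum_congr rfl hcong]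
      have harg0 : ∀ i : ℕ, t + 1 - 1 - ((0:ℕ):ℤ) - (i:ℤ) = t - (i:ℤ) := by
        intro i; push_cast; ring
      simp only [harg0, pow_zero, one_mul, ← Finset.mul_sum]
      rw [pow_succ]
      ring
  -- nonnegativity
  have hεnn : ∀ k : ℕ, ∀ s : ℤ, s ≤ (k : ℤ) → 0 ≤ ε s := by
    intro k
    induction k with
    | zero =>
      intro s hs
      rw [hε0 s (by exact_mod_cast hs)]; norm_num
    | succ k ih =>
      intro s hs
      by_cases h : s ≤ (k : ℤ)
      · exact ih s h
      · have hs' : s = (k : ℤ) + 1 := by push_cast at hs ⊢; omega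
        subst hs'
        rw [hstep k (by positivity)]
        have h1 : 0 ≤ κ * ε k := mul_nonneg hκ (ih k le_rfl)
        have h2 : 0 ≤ ∑ i ∈ Finset.Icc 1 (n - 1), ε ((k:ℤ) - (i:ℤ)) :=
          Finset.sum_nonneg fun i _ => ih _ (by omega)
        have := mul_nonneg (mul_nonneg hα hμ) h2
        linarith
  -- the key bound
  have hbnd : ∀ k : ℕ, ∀ s : ℤ, s ≤ (k : ℤ) → ε s ≤ ρ ^ ((s.toNat + n - 1) / n) := by
    intro k
    induction k with
    | zero =>
      intro s hs
      have hz : s.toNat = 0 := by omega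
      have : (s.toNat + n - 1) / n = 0 := by rw [hz]; exact Nat.div_eq_of_lt (by omega)
      rw [hε0 s (by exact_mod_cast hs), this, pow_zero]
    | succ k ih =>
      intro s hs
      by_cases h : s ≤ (k : ℤ)
      · exact ih s h
      · have hs' : s = (k : ℤ) + 1 := by push_cast at hs ⊢; omega
        subst hs'
        have htn : (((k:ℤ) + 1).toNat + n - 1) / n = (k + n) / n := by
          have : ((k:ℤ) + 1).toNat = k + 1 := by omega
          rw [this]; congr 1; omega
        rw [htn, hstep k (by positivity)]
        set c : ℕ := (k + n) / n with hc
        have hc1 : 1 ≤ c := by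
          rw [hc, Nat.le_div_iff_mul_le (by omega)]; omega
        -- bound ε k
        have hek : ε k ≤ ρ ^ (c - 1) := by
          refine (ih k le_rfl).trans ?_
          have hk : (k:ℤ).toNat = k := by omega
          rw [hk]
          apply pow_le_pow_of_le_one hρ0 hρ1.le
          have h1 : c ≤ (k + n - 1) / n + 1 := by
            rw [hc, ← Nat.add_div_right _ (show 0 < n by omega)]
            exact Nat.div_le_div_right (by omega)
          omega
        -- bound the summands
        have hsum : ∀ i ∈ Finset.Icc 1 (n - 1), ε ((k:ℤ) - (i:ℤ)) ≤ ρ ^ (c - 1) := by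
          intro i hi
          rw [Finset.mem_Icc] at hi
          by_cases hki : (k:ℤ) - (i:ℤ) ≤ 0
          · have hcz : c = 1 := by
              have : (k + n) / n < 2 := by
                rw [Nat.div_lt_iff_lt_mul (by omega)]; omega
              omega
            rw [hε0 _ hki, hcz]; norm_num
          · push_neg at hki
            have hik : i ≤ k := by omega
            refine (ih _ (by omega)).trans ?_
            have hk : ((k:ℤ) - (i:ℤ)).toNat = k - i := by omega
            rw [hk]
            apply pow_le_pow_of_le_one hρ0 hρ1.le
            have h1 : c ≤ (k - i + n - 1) / n + 1 := by
              rw [hc, ← Nat.add_div_right _ (show 0 < n by omega)]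
              exact Nat.div_le_div_right (by omega)
            omega
        have hS : ∑ i ∈ Finset.Icc 1 (n - 1), ε ((k:ℤ) - (i:ℤ))
            ≤ ((n:ℝ) - 1) * ρ ^ (c - 1) := by
          calc ∑ i ∈ Finset.Icc 1 (n - 1), ε ((k:ℤ) - (i:ℤ))
              ≤ ∑ _i ∈ Finset.Icc 1 (n - 1), ρ ^ (c - 1) := Finset.sum_le_sum hsum
            _ = ((n - 1 : ℕ) : ℝ) * ρ ^ (c - 1) := by
                rw [Finset.sum_const, Nat.card_Icc, nsmul_eq_mul]; norm_num
            _ = ((n:ℝ) - 1) * ρ ^ (c - 1) := by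
                congr 1; push_cast [Nat.cast_sub (by omega : 1 ≤ n)]; ring
        have hpow : ρ ^ c = ρ * ρ ^ (c - 1) := by
          conv_lhs => rw [show c = (c - 1) + 1 by omega]
          rw [pow_succ]; ring
        have hρpnn : 0 ≤ ρ ^ (c - 1) := pow_nonneg hρ0 _
        calc κ * ε k + α * μ * ∑ i ∈ Finset.Icc 1 (n - 1), ε ((k:ℤ) - (i:ℤ))
            ≤ κ * ρ ^ (c - 1) + α * μ * (((n:ℝ) - 1) * ρ ^ (c - 1)) := by
              have := mul_le_mul_of_nonneg_left hS (mul_nonneg hα hμ)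
              have := mul_le_mul_of_nonneg_left hek hκ
              linarith
          _ = ρ ^ c := by rw [hpow, hρdef]; ring
  -- tendsto of the bound
  have hdiv : Filter.Tendsto (fun k : ℕ => (k + n - 1) / n) Filter.atTop Filter.atTop := by
    apply Filter.tendsto_atTop.2
    intro b
    filter_upwards [Filter.eventually_ge_atTop (b * n)] with k hk
    rw [Nat.le_div_iff_mul_le (by omega)]; omega
  have hpowt : Filter.Tendsto (fun k : ℕ => ρ ^ ((k + n - 1) / n)) Filter.atTop (nhds 0) :=
    (tendsto_pow_atTop_nhds_zero_of_lt_one hρ0 hρ1).comp hdiv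
  have hεt : Filter.Tendsto (fun t : ℕ => ε (t : ℤ)) Filter.atTop (nhds 0) := by
    apply squeeze_zero (fun k => hεnn k k le_rfl) (fun k => ?_) hpowt
    have := hbnd k k le_rfl
    rwa [show ((k:ℤ)).toNat = k by omega] at this
  refine ⟨hεt, ?_⟩
  intro E hEnn hE0 hErec
  have hEbnd : ∀ k : ℕ, ∀ s : ℤ, s ≤ (k : ℤ) → E s ≤ E 0 * ε s := by
    intro k
    induction k with
    | zero =>
      intro s hs
      rw [hE0 s (by exact_mod_cast hs), hε0 s (by exact_mod_cast hs), mul_one]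
    | succ k ih =>
      intro s hs
      by_cases h : s ≤ (k : ℤ)
      · exact ih s h
      · have hs' : s = (k : ℤ) + 1 := by push_cast at hs ⊢; omega
        subst hs'
        refine (hErec k (by positivity)).trans ?_
        rw [hstep k (by positivity)]
        have h1 : κ * E k ≤ κ * (E 0 * ε k) :=
          mul_le_mul_of_nonneg_left (ih k le_rfl) hκ
        have h2 : ∑ i ∈ Finset.Icc 1 (n - 1), E ((k:ℤ) - (i:ℤ))
            ≤ E 0 * ∑ i ∈ Finset.Icc 1 (n - 1), ε ((k:ℤ) - (i:ℤ)) := by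
          rw [Finset.mul_sum]
          exact Finset.sum_le_sum fun i _ => ih _ (by omega)
        have h3 := mul_le_mul_of_nonneg_left h2 (mul_nonneg hα hμ)
        ring_nf
        ring_nf at h1 h3 ⊢
        linarith
  have hlim : Filter.Tendsto (fun k : ℕ => E 0 * ε (k:ℤ)) Filter.atTop (nhds 0) := by
    simpa using hεt.const_mul (E 0)
  exact squeeze_zero (fun k => hEnn _) (fun k => hEbnd k k le_rfl) hlim
end

section
/- (Corollary 4.2 of the paper: convergence of block Frontal Slice Descent, matrix form.) In the blocked FSD setup with block size s and m = n/s ≥ 2 blocks, define κ(s) = max_{0≤i≤m−1} ‖I_K − α·N_iᵀN_i‖₂ and μ(s) = max_{0≤i,j≤m−1, i≠j} ‖N_iᵀN_j‖₂. If the learning rate α satisfies κ(s) + α·μ(s)·(m−1) < 1, then lim_{t→∞} ‖X(t) − X*‖_F = 0. -/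
open Matrix Finset Filter

attribute [local instance] Matrix.frobeniusNormedAddCommGroup Matrix.frobeniusNormedSpace

lemma frobNorm_eq_norm {m k : ℕ} (A : Matrix (Fin m) (Fin k) ℝ) : frobNorm A = ‖A‖ := by
  rw [frobNorm, Matrix.frobenius_norm_def, Real.sqrt_eq_rpow]
  congr 1
  refine Finset.sum_congr rfl fun i _ => Finset.sum_congr rfl fun j _ => ?_
  rw [Real.norm_eq_abs, show ((2:ℝ)) = ((2:ℕ):ℝ) by norm_num, Real.rpow_natCast, sq_abs]

lemma specNorm_nonneg {m k : ℕ} (A : Matrix (Fin m) (Fin k) ℝ) : 0 ≤ specNorm A :=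
  norm_nonneg _

lemma norm_col_sq {a b : ℕ} (A : Matrix (Fin a) (Fin b) ℝ) (j : Fin b) :
    ‖((WithLp.equiv 2 (Fin a → ℝ)).symm (fun i => A i j))‖ ^ 2 = ∑ i, (A i j)^2 := by
  rw [EuclideanSpace.norm_eq, Real.sq_sqrt (by positivity)]
  simp [sq_abs]

lemma frob_col {a b : ℕ} (A : Matrix (Fin a) (Fin b) ℝ) :
    frobNorm A = Real.sqrt (∑ j, ‖((WithLp.equiv 2 (Fin a → ℝ)).symm (fun i => A i j))‖ ^ 2) := by
  rw [frobNorm, Finset.sum_comm]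
  congr 1
  exact Finset.sum_congr rfl fun j _ => (norm_col_sq A j).symm

lemma frobNorm_mul_le_spec {a b c : ℕ} (A : Matrix (Fin a) (Fin b) ℝ)
    (B : Matrix (Fin b) (Fin c) ℝ) :
    frobNorm (A * B) ≤ specNorm A * frobNorm B := by
  rw [frob_col (A*B), frob_col B]
  have hb : ∀ j, ‖((WithLp.equiv 2 (Fin a → ℝ)).symm (fun i => (A*B) i j))‖
      ≤ specNorm A * ‖((WithLp.equiv 2 (Fin b → ℝ)).symm (fun i => B i j))‖ := by
    intro j
    have h1 : (WithLp.equiv 2 (Fin a → ℝ)).symm (fun i => (A*B) i j)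
        = Matrix.toEuclideanLin A ((WithLp.equiv 2 (Fin b → ℝ)).symm (fun i => B i j)) := by
      rw [WithLp.equiv_symm_apply, WithLp.equiv_symm_apply, Matrix.toEuclideanLin_apply_piLp_toLp]
      refine congrArg _ (funext fun i => ?_)
      simp [Matrix.mul_apply, Matrix.mulVec, dotProduct]
    rw [h1]
    have h2 := (LinearMap.toContinuousLinearMap (Matrix.toEuclideanLin A)).le_opNorm
      ((WithLp.equiv 2 (Fin b → ℝ)).symm (fun i => B i j))
    simpa [specNorm] using h2
  calc Real.sqrt (∑ j, ‖((WithLp.equiv 2 (Fin a → ℝ)).symm (fun i => (A*B) i j))‖ ^ 2)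
      ≤ Real.sqrt (∑ j, (specNorm A * ‖((WithLp.equiv 2 (Fin b → ℝ)).symm (fun i => B i j))‖)^2) := by
        apply Real.sqrt_le_sqrt
        exact Finset.sum_le_sum fun j _ => pow_le_pow_left₀ (norm_nonneg _) (hb j) 2
    _ = specNorm A * Real.sqrt (∑ j, ‖((WithLp.equiv 2 (Fin b → ℝ)).symm (fun i => B i j))‖ ^ 2) := by
        rw [show (∑ j, (specNorm A * ‖((WithLp.equiv 2 (Fin b → ℝ)).symm (fun i => B i j))‖)^2)
            = specNorm A^2 * ∑ j, ‖((WithLp.equiv 2 (Fin b → ℝ)).symm (fun i => B i j))‖^2 by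
          rw [Finset.mul_sum]; exact Finset.sum_congr rfl fun j _ => by ring]
        rw [Real.sqrt_mul (sq_nonneg _), Real.sqrt_sq (specNorm_nonneg A)]

lemma idx_sub_inj {m : ℕ} (hm : 0 < m) (t : ℤ) {a b : ℕ} (ha : a < m) (hb : b < m)
    (h : idx m hm (t - (a:ℤ)) = idx m hm (t - (b:ℤ))) : a = b := by
  have hmz : ((m:ℤ)) ≠ 0 := by exact_mod_cast hm.ne'
  have h1 : (t - (a:ℤ)) % m = (t - (b:ℤ)) % m := by
    have hv := congrArg Fin.val h
    simp only [idx] at hv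
    have h2 := Int.emod_nonneg (t - (a:ℤ)) hmz
    have h3 := Int.emod_nonneg (t - (b:ℤ)) hmz
    omega
  have e1 : ((a:ℤ)) % m = ((b:ℤ)) % m := by
    have d1 : ((a:ℤ)) % m = (t % m - (t - (a:ℤ)) % m) % m := by
      conv_lhs => rw [show (a:ℤ) = t - (t - (a:ℤ)) by ring]
      rw [Int.sub_emod]
    have d2 : ((b:ℤ)) % m = (t % m - (t - (b:ℤ)) % m) % m := by
      conv_lhs => rw [show (b:ℤ) = t - (t - (b:ℤ)) by ring]
      rw [Int.sub_emod]
    rw [d1, d2, h1]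
  have ea : ((a:ℤ)) % m = a := Int.emod_eq_of_lt (by positivity) (by exact_mod_cast ha)
  have eb : ((b:ℤ)) % m = b := Int.emod_eq_of_lt (by positivity) (by exact_mod_cast hb)
  omega


theorem block_fsd_convergence
    {s m N K P : ℕ} (hs : 1 ≤ s) (hm : 2 ≤ m) (hN : 1 ≤ N) (hK : 1 ≤ K) (hP : 1 ≤ P)
    (M : Fin (m * s) → Matrix (Fin N) (Fin K) ℝ)
    (Xstar : Matrix (Fin K) (Fin P) ℝ)
    (α : ℝ) (hα : 0 < α)
    (Nblk : Fin m → Matrix (Fin N) (Fin K) ℝ)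
    (hNblk : ∀ i : Fin m, Nblk i = ∑ j : Fin s, M ⟨i.1 * s + j.1, by
      have h1 : i.1 * s + j.1 < (i.1 + 1) * s := by
        have := j.2
        have : (i.1 + 1) * s = i.1 * s + s := by ring
        omega
      have h2 : (i.1 + 1) * s ≤ m * s := Nat.mul_le_mul i.2 le_rfl
      omega⟩)
    (B : Matrix (Fin N) (Fin P) ℝ) (hB : B = (∑ i, M i) * Xstar)
    (X : ℤ → Matrix (Fin K) (Fin P) ℝ) (R : ℤ → Matrix (Fin N) (Fin P) ℝ)
    (hX0 : ∀ t : ℤ, t ≤ 0 → X t = 0)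
    (hR : ∀ t : ℤ, 0 ≤ t →
      R (t + 1) = B - ∑ i : Fin m, Nblk (idx m (by omega) (t - ((i : ℕ) : ℤ))) * X (t - ((i : ℕ) : ℤ)))
    (hXstep : ∀ t : ℤ, 0 ≤ t →
      X (t + 1) = X t + α • ((Nblk (idx m (by omega) t))ᵀ * R (t + 1)))
    (hrate : kappaFSD (show 0 < m by omega) α Nblk + α * muFSD hm Nblk * ((m : ℝ) - 1) < 1) :
    Filter.Tendsto (fun t : ℕ => frobNorm (X (t : ℤ) - Xstar)) Filter.atTop (nhds 0) := by
  have hm0 : 0 < m := by omega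
  have hne : (Finset.univ : Finset (Fin m)).Nonempty := ⟨⟨0, hm0⟩, Finset.mem_univ _⟩
  haveI : NeZero m := ⟨by omega⟩
  -- re-state hypotheses with a fixed proof of 0 < m
  have hR' : ∀ t : ℤ, 0 ≤ t →
      R (t + 1) = B - ∑ i : Fin m, Nblk (idx m hm0 (t - ((i : ℕ) : ℤ))) * X (t - ((i : ℕ) : ℤ)) := hR
  have hXstep' : ∀ t : ℤ, 0 ≤ t →
      X (t + 1) = X t + α • ((Nblk (idx m hm0 t))ᵀ * R (t + 1)) := hXstep
  set κ := kappaFSD hm0 α Nblk with hκdef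
  set μ := muFSD hm Nblk with hμdef
  set ρ := κ + α * μ * ((m : ℝ) - 1) with hρdef
  have hρ1 : ρ < 1 := by rw [hρdef, hκdef, hμdef]; exact hrate
  have hκ : ∀ i : Fin m, specNorm (1 - α • ((Nblk i)ᵀ * Nblk i)) ≤ κ := by
    intro i
    rw [hκdef]
    exact Finset.le_sup' (fun j : Fin m => specNorm (1 - α • ((Nblk j)ᵀ * Nblk j)))
      (Finset.mem_univ i)
  have hμpair : ∀ i j : Fin m, i ≠ j → specNorm ((Nblk i)ᵀ * Nblk j) ≤ μ := by
    intro i j hij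
    rw [hμdef]
    exact Finset.le_sup' (fun p : Fin m × Fin m => specNorm ((Nblk p.1)ᵀ * Nblk p.2))
      (Finset.mem_filter.mpr ⟨Finset.mem_univ (i, j), hij⟩)
  have hκ0 : 0 ≤ κ := le_trans (specNorm_nonneg _) (hκ ⟨0, hm0⟩)
  have hμ0 : 0 ≤ μ := le_trans (specNorm_nonneg _)
    (hμpair ⟨0, by omega⟩ ⟨1, by omega⟩ (by simp [Fin.ext_iff]))
  have hm1 : (0:ℝ) ≤ (m : ℝ) - 1 := by
    have : (2:ℝ) ≤ m := by exact_mod_cast hm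
    linarith
  have hρ0 : 0 ≤ ρ := add_nonneg hκ0 (mul_nonneg (mul_nonneg hα.le hμ0) hm1)
  -- the sup of recent errors
  set b : ℤ → ℝ := fun t => Finset.univ.sup' hne fun i : Fin m => ‖X (t - ((i : ℕ) : ℤ)) - Xstar‖
    with hbdef
  have hb_eq : ∀ t, b t = Finset.univ.sup' hne fun i : Fin m => ‖X (t - ((i : ℕ) : ℤ)) - Xstar‖ :=
    fun t => by rw [hbdef]
  have hle_b : ∀ (t : ℤ) (i : Fin m), ‖X (t - ((i : ℕ) : ℤ)) - Xstar‖ ≤ b t := by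
    intro t i
    rw [hb_eq t]
    exact Finset.le_sup' (fun j : Fin m => ‖X (t - ((j : ℕ) : ℤ)) - Xstar‖) (Finset.mem_univ i)
  have hb0 : ∀ t : ℤ, ‖X t - Xstar‖ ≤ b t := fun t => by simpa using hle_b t ⟨0, hm0⟩
  have hbnonneg : ∀ t, 0 ≤ b t := fun t => le_trans (norm_nonneg _) (hb0 t)
  -- block sums add up
  have hNsum : (∑ i : Fin m, Nblk i) = ∑ j, M j := by
    simp only [hNblk]
    rw [← Equiv.sum_comp finProdFinEquiv M, Fintype.sum_prod_type]
    refine Finset.sum_congr rfl fun i _ => Finset.sum_congr rfl fun j _ => ?_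
    exact congrArg M (Fin.ext (by simp [finProdFinEquiv]; ring))
  have hshift : ∀ t : ℤ, (∑ i : Fin m, Nblk (idx m hm0 (t - ((i : ℕ) : ℤ)))) = ∑ i, Nblk i := by
    intro t
    apply Fintype.sum_bijective (fun i : Fin m => idx m hm0 (t - ((i : ℕ) : ℤ))) ?_ _ _ (fun i => rfl)
    rw [Fintype.bijective_iff_injective_and_card]
    refine ⟨fun i j hij => ?_, rfl⟩
    exact Fin.ext (idx_sub_inj hm0 t i.isLt j.isLt hij)
  -- the error recursion
  have hEstep : ∀ t : ℤ, 0 ≤ t → X (t + 1) - Xstar = (X t - Xstar) - ∑ i : Fin m,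
      α • ((Nblk (idx m hm0 t))ᵀ *
        (Nblk (idx m hm0 (t - ((i : ℕ) : ℤ))) * (X (t - ((i : ℕ) : ℤ)) - Xstar))) := by
    intro t ht
    have hBt : B = ∑ i : Fin m, Nblk (idx m hm0 (t - ((i : ℕ) : ℤ))) * Xstar := by
      rw [hB, ← hNsum, ← hshift t, Matrix.sum_mul]
    have hRt : R (t + 1) = - ∑ i : Fin m,
        Nblk (idx m hm0 (t - ((i : ℕ) : ℤ))) * (X (t - ((i : ℕ) : ℤ)) - Xstar) := by
      rw [hR' t ht, hBt, ← Finset.sum_sub_distrib, ← Finset.sum_neg_distrib]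
      exact Finset.sum_congr rfl fun i _ => by rw [Matrix.mul_sub, neg_sub]
    rw [hXstep' t ht, hRt, Matrix.mul_neg, smul_neg, Matrix.mul_sum, Finset.smul_sum]
    abel
  -- one-step contraction to the sup
  have hrec : ∀ t : ℤ, 0 ≤ t → ‖X (t + 1) - Xstar‖ ≤ ρ * b t := by
    intro t ht
    rw [hEstep t ht]
    have h00 : t - ((((0 : Fin m) : ℕ)) : ℤ) = t := by simp
    rw [← Finset.add_sum_erase _ _ (Finset.mem_univ (0 : Fin m)), h00]
    have hfac : X t - Xstar -
        (α • ((Nblk (idx m hm0 t))ᵀ * (Nblk (idx m hm0 t) * (X t - Xstar)))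
          + ∑ i ∈ Finset.univ.erase (0 : Fin m),
            α • ((Nblk (idx m hm0 t))ᵀ *
              (Nblk (idx m hm0 (t - ((i : ℕ) : ℤ))) * (X (t - ((i : ℕ) : ℤ)) - Xstar))))
        = (1 - α • ((Nblk (idx m hm0 t))ᵀ * Nblk (idx m hm0 t))) * (X t - Xstar)
          - ∑ i ∈ Finset.univ.erase (0 : Fin m),
            α • ((Nblk (idx m hm0 t))ᵀ *
              (Nblk (idx m hm0 (t - ((i : ℕ) : ℤ))) * (X (t - ((i : ℕ) : ℤ)) - Xstar))) := by
      rw [Matrix.sub_mul, Matrix.one_mul, Matrix.smul_mul, Matrix.mul_assoc]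
      abel
    rw [hfac]
    have hterm : ∀ i ∈ Finset.univ.erase (0 : Fin m),
        ‖α • ((Nblk (idx m hm0 t))ᵀ *
          (Nblk (idx m hm0 (t - ((i : ℕ) : ℤ))) * (X (t - ((i : ℕ) : ℤ)) - Xstar)))‖
          ≤ α * μ * b t := by
      intro i hi
      have hne0 : idx m hm0 t ≠ idx m hm0 (t - ((i : ℕ) : ℤ)) := by
        intro hcontra
        have h0' : idx m hm0 (t - ((0 : ℕ) : ℤ)) = idx m hm0 (t - ((i : ℕ) : ℤ)) := by
          rw [show t - ((0 : ℕ) : ℤ) = t by simp]; exact hcontra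
        have := idx_sub_inj hm0 t (by omega) i.isLt h0'
        exact (Finset.mem_erase.mp hi).1 (Fin.ext this.symm)
      rw [norm_smul, Real.norm_eq_abs, abs_of_pos hα, ← Matrix.mul_assoc]
      calc α * ‖((Nblk (idx m hm0 t))ᵀ * Nblk (idx m hm0 (t - ((i : ℕ) : ℤ)))) *
              (X (t - ((i : ℕ) : ℤ)) - Xstar)‖
          ≤ α * (specNorm ((Nblk (idx m hm0 t))ᵀ * Nblk (idx m hm0 (t - ((i : ℕ) : ℤ)))) *
              ‖X (t - ((i : ℕ) : ℤ)) - Xstar‖) := by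
            refine mul_le_mul_of_nonneg_left ?_ hα.le
            rw [← frobNorm_eq_norm, ← frobNorm_eq_norm]
            exact frobNorm_mul_le_spec _ _
        _ ≤ α * (μ * b t) := by
            refine mul_le_mul_of_nonneg_left ?_ hα.le
            exact mul_le_mul (hμpair _ _ hne0) (hle_b t i) (norm_nonneg _) hμ0
        _ = α * μ * b t := by ring
    have hcard : (Finset.univ.erase (0 : Fin m)).card = m - 1 := by
      rw [Finset.card_erase_of_mem (Finset.mem_univ _), Finset.card_univ, Fintype.card_fin]
    calc ‖(1 - α • ((Nblk (idx m hm0 t))ᵀ * Nblk (idx m hm0 t))) * (X t - Xstar)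
          - ∑ i ∈ Finset.univ.erase (0 : Fin m),
            α • ((Nblk (idx m hm0 t))ᵀ *
              (Nblk (idx m hm0 (t - ((i : ℕ) : ℤ))) * (X (t - ((i : ℕ) : ℤ)) - Xstar)))‖
        ≤ ‖(1 - α • ((Nblk (idx m hm0 t))ᵀ * Nblk (idx m hm0 t))) * (X t - Xstar)‖
          + ‖∑ i ∈ Finset.univ.erase (0 : Fin m),
            α • ((Nblk (idx m hm0 t))ᵀ *
              (Nblk (idx m hm0 (t - ((i : ℕ) : ℤ))) * (X (t - ((i : ℕ) : ℤ)) - Xstar)))‖ :=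
          norm_sub_le _ _
      _ ≤ κ * b t + ((m : ℝ) - 1) * (α * μ * b t) := by
          gcongr ?_ + ?_
          · calc ‖(1 - α • ((Nblk (idx m hm0 t))ᵀ * Nblk (idx m hm0 t))) * (X t - Xstar)‖
                ≤ specNorm (1 - α • ((Nblk (idx m hm0 t))ᵀ * Nblk (idx m hm0 t))) *
                  ‖X t - Xstar‖ := by
                  rw [← frobNorm_eq_norm, ← frobNorm_eq_norm]
                  exact frobNorm_mul_le_spec _ _
              _ ≤ κ * b t :=
                  mul_le_mul (hκ _) (hb0 t) (norm_nonneg _) hκ0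
          · calc ‖∑ i ∈ Finset.univ.erase (0 : Fin m),
                α • ((Nblk (idx m hm0 t))ᵀ *
                  (Nblk (idx m hm0 (t - ((i : ℕ) : ℤ))) * (X (t - ((i : ℕ) : ℤ)) - Xstar)))‖
                ≤ ∑ i ∈ Finset.univ.erase (0 : Fin m), α * μ * b t :=
                  le_trans (norm_sum_le _ _) (Finset.sum_le_sum hterm)
              _ = ((m : ℝ) - 1) * (α * μ * b t) := by
                  rw [Finset.sum_const, hcard, nsmul_eq_mul]
                  congr 1
                  push_cast [Nat.cast_sub (by omega : 1 ≤ m)]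
                  ring
      _ = ρ * b t := by rw [hρdef]; ring
  -- the sup is non-increasing
  have hbstep : ∀ t : ℤ, 0 ≤ t → b (t + 1) ≤ b t := by
    intro t ht
    rw [hb_eq (t + 1)]
    apply Finset.sup'_le
    intro i _
    rcases Nat.eq_zero_or_pos i.1 with h0 | hpos
    · rw [show t + 1 - ((i : ℕ) : ℤ) = t + 1 by omega]
      calc ‖X (t + 1) - Xstar‖ ≤ ρ * b t := hrec t ht
        _ ≤ 1 * b t := mul_le_mul_of_nonneg_right hρ1.le (hbnonneg t)
        _ = b t := one_mul _
    · rw [show t + 1 - ((i : ℕ) : ℤ) = t - (((i.1 - 1 : ℕ)) : ℤ) by omega]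
      exact hle_b t ⟨i.1 - 1, by omega⟩
  have hbmono : ∀ t : ℤ, 0 ≤ t → ∀ k : ℕ, b (t + (k : ℤ)) ≤ b t := by
    intro t ht k
    induction k with
    | zero => simp
    | succ k ih =>
      have e : t + ((k + 1 : ℕ) : ℤ) = (t + (k : ℕ)) + 1 := by push_cast; ring
      rw [e]
      exact le_trans (hbstep (t + k) (by omega)) ih
  -- m steps contract
  have hbm : ∀ t : ℤ, 0 ≤ t → b (t + (m : ℤ)) ≤ ρ * b t := by
    intro t ht
    rw [hb_eq (t + (m : ℤ))]
    apply Finset.sup'_le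
    intro i _
    have hi := i.isLt
    rw [show t + (m : ℤ) - ((i : ℕ) : ℤ) = (t + ((m - 1 - i.1 : ℕ) : ℤ)) + 1 by omega]
    calc ‖X ((t + ((m - 1 - i.1 : ℕ) : ℤ)) + 1) - Xstar‖
        ≤ ρ * b (t + ((m - 1 - i.1 : ℕ) : ℤ)) := hrec _ (by omega)
      _ ≤ ρ * b t := mul_le_mul_of_nonneg_left (hbmono t ht _) hρ0
  have hgeo : ∀ q : ℕ, b ((m * q : ℕ) : ℤ) ≤ ρ ^ q * b 0 := by
    intro q
    induction q with
    | zero => simp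
    | succ q ih =>
      have e : ((m * (q + 1) : ℕ) : ℤ) = ((m * q : ℕ) : ℤ) + (m : ℤ) := by push_cast; ring
      rw [e]
      calc b (((m * q : ℕ) : ℤ) + (m : ℤ)) ≤ ρ * b ((m * q : ℕ) : ℤ) := hbm _ (by positivity)
        _ ≤ ρ * (ρ ^ q * b 0) := mul_le_mul_of_nonneg_left ih hρ0
        _ = ρ ^ (q + 1) * b 0 := by ring
  have hfinal : ∀ t : ℕ, ‖X (t : ℤ) - Xstar‖ ≤ ρ ^ (t / m) * b 0 := by
    intro t
    have h1 := hb0 (t : ℤ)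
    have e : (t : ℤ) = ((m * (t / m) : ℕ) : ℤ) + ((t % m : ℕ) : ℤ) := by
      exact_mod_cast (Nat.div_add_mod t m).symm
    have h2 : b (t : ℤ) ≤ b ((m * (t / m) : ℕ) : ℤ) := by
      have := hbmono ((m * (t / m) : ℕ) : ℤ) (by positivity) (t % m)
      rw [← e] at this
      exact this
    have h3 := hgeo (t / m)
    linarith
  simp only [frobNorm_eq_norm]
  apply squeeze_zero (fun t => norm_nonneg _) hfinal
  have hdiv : Tendsto (fun t : ℕ => t / m) atTop atTop := by
    apply tendsto_atTop_atTop.mpr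
    intro c
    exact ⟨c * m, fun n hn => (Nat.le_div_iff_mul_le hm0).mpr hn⟩
  have := ((tendsto_pow_atTop_nhds_zero_of_lt_one hρ0 hρ1).comp hdiv).mul_const (b 0)
  simpa using this
end

section
/- (Uniform error bound for noisy Frontal Slice Descent; quantitative form of Theorem 4.4 of the paper.) Let n ≥ 2 be an integer, let κ, μ, α, η_e be nonnegative reals with c := κ + α·μ·(n−1) < 1, and let E : ℤ → ℝ be a sequence of nonnegative reals with E(t) = E(0) for all t ≤ 0 and E(t+1) ≤ κ·E(t) + α·μ·∑_{i=1}^{n−1} E(t−i) + α·η_e for every integer t ≥ 0. Then for every integer t ≥ 0, E(t) ≤ ε_t · E(0) + α·η_e/(1 − c), where ε_t is the recursively defined bounding coefficient. -/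
open Matrix Finset Filter

theorem noisy_fsd_uniform_bound
    (n : ℕ) (hn : 2 ≤ n) (κ μ α ηe : ℝ)
    (hκ : 0 ≤ κ) (hμ : 0 ≤ μ) (hα : 0 ≤ α) (hηe : 0 ≤ ηe)
    (hc : κ + α * μ * ((n : ℝ) - 1) < 1)
    (ε : ℤ → ℝ)
    (hε0 : ∀ t : ℤ, t ≤ 0 → ε t = 1)
    (hεrec : ∀ t : ℤ, 1 ≤ t →
      ε t = κ ^ t.toNat + α * μ * ∑ j ∈ Finset.range t.toNat, κ ^ j *
          ∑ i ∈ Finset.Icc 1 (n - 1), ε (t - 1 - (j : ℤ) - (i : ℤ)))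
    (E : ℤ → ℝ) (hEnn : ∀ t : ℤ, 0 ≤ E t) (hEneg : ∀ t : ℤ, t ≤ 0 → E t = E 0)
    (hErec : ∀ t : ℤ, 0 ≤ t →
      E (t + 1) ≤ κ * E t + α * μ * (∑ i ∈ Finset.Icc 1 (n - 1), E (t - (i : ℤ))) + α * ηe) :
    ∀ t : ℤ, 0 ≤ t →
      E t ≤ ε t * E 0 + α * ηe / (1 - (κ + α * μ * ((n : ℝ) - 1))) := by
  set c : ℝ := κ + α * μ * ((n : ℝ) - 1) with hc_def
  set D : ℝ := α * ηe / (1 - c) with hD_def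
  have h1c : 0 < 1 - c := by linarith
  have hD0 : 0 ≤ D := div_nonneg (mul_nonneg hα hηe) (le_of_lt h1c)
  have hDfix : c * D + α * ηe = D := by
    have hmul : D * (1 - c) = α * ηe := by rw [hD_def]; exact div_mul_cancel₀ _ h1c.ne'
    linear_combination -hmul
  have hcard : ((Finset.Icc 1 (n - 1)).card : ℝ) = (n : ℝ) - 1 := by
    rw [Nat.card_Icc]
    have : n - 1 + 1 - 1 = n - 1 := by omega
    rw [this, Nat.cast_sub (by omega : 1 ≤ n)]
    simp
  -- recursion for ε
  have hεstep : ∀ t : ℤ, 0 ≤ t →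
      ε (t + 1) = κ * ε t + α * μ * ∑ i ∈ Finset.Icc 1 (n - 1), ε (t - (i : ℤ)) := by
    intro t ht
    rcases eq_or_lt_of_le ht with h0 | h1
    · subst h0
      simp only [zero_add]
      rw [hεrec 1 le_rfl, hε0 0 le_rfl]
      norm_num [Finset.sum_range_one]
    · have ht1 : (1 : ℤ) ≤ t := h1
      obtain ⟨m, rfl⟩ := Int.eq_ofNat_of_zero_le ht
      have hm : 1 ≤ m := by exact_mod_cast ht1
      have htn : ((m : ℤ)).toNat = m := Int.toNat_natCast m
      have htn1 : ((m : ℤ) + 1).toNat = m + 1 := by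
        rw [show ((m : ℤ) + 1) = ((m + 1 : ℕ) : ℤ) by push_cast; ring, Int.toNat_natCast]
      rw [hεrec ((m : ℤ) + 1) (by linarith), hεrec (m : ℤ) ht1, htn, htn1]
      rw [Finset.sum_range_succ']
      have hre : ∀ j ∈ Finset.range m,
          κ ^ (j + 1) * ∑ i ∈ Finset.Icc 1 (n - 1), ε ((m : ℤ) + 1 - 1 - ((j + 1 : ℕ) : ℤ) - (i : ℤ))
          = κ * (κ ^ j * ∑ i ∈ Finset.Icc 1 (n - 1), ε ((m : ℤ) - 1 - (j : ℤ) - (i : ℤ))) := by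
        intro j _
        have h2 : ∀ i : ℕ, (m : ℤ) + 1 - 1 - ((j + 1 : ℕ) : ℤ) - (i : ℤ)
            = (m : ℤ) - 1 - (j : ℤ) - (i : ℤ) := by intro i; push_cast; ring
        simp only [h2]
        ring
      rw [Finset.sum_congr rfl hre, Finset.mul_sum, ← Finset.mul_sum]
      have h3 : ∀ i : ℕ, (m : ℤ) + 1 - 1 - ((0 : ℕ) : ℤ) - (i : ℤ) = (m : ℤ) - (i : ℤ) := by
        intro i; push_cast; ring
      simp only [h3, pow_zero, one_mul]
      ring
  -- main induction
  have key : ∀ m : ℕ, ∀ s : ℤ, s ≤ (m : ℤ) → E s ≤ ε s * E 0 + D := by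
    intro m
    induction m with
    | zero =>
      intro s hs
      rw [hEneg s (by exact_mod_cast hs), hε0 s (by exact_mod_cast hs), one_mul]
      linarith [hEnn 0]
    | succ m ih =>
      intro s hs
      rcases le_or_gt s (m : ℤ) with h | h
      · exact ih s h
      · have hseq : s = (m : ℤ) + 1 := by push_cast at hs ⊢; omega
        subst hseq
        have hstep := hErec (m : ℤ) (by positivity)
        have hEm := ih (m : ℤ) le_rfl
        have hsum : ∑ i ∈ Finset.Icc 1 (n - 1), E ((m : ℤ) - (i : ℤ))
            ≤ ∑ i ∈ Finset.Icc 1 (n - 1), (ε ((m : ℤ) - (i : ℤ)) * E 0 + D) := by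
          apply Finset.sum_le_sum
          intro i hi
          exact ih _ (by simp at hi; omega)
        have hsum2 : ∑ i ∈ Finset.Icc 1 (n - 1), (ε ((m : ℤ) - (i : ℤ)) * E 0 + D)
            = (∑ i ∈ Finset.Icc 1 (n - 1), ε ((m : ℤ) - (i : ℤ))) * E 0
              + ((n : ℝ) - 1) * D := by
          rw [Finset.sum_add_distrib, Finset.sum_const, ← Finset.sum_mul, nsmul_eq_mul, hcard]
        calc E ((m : ℤ) + 1) ≤ κ * E (m : ℤ)
              + α * μ * (∑ i ∈ Finset.Icc 1 (n - 1), E ((m : ℤ) - (i : ℤ))) + α * ηe := hstep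
          _ ≤ κ * (ε (m : ℤ) * E 0 + D)
              + α * μ * ((∑ i ∈ Finset.Icc 1 (n - 1), ε ((m : ℤ) - (i : ℤ))) * E 0
                + ((n : ℝ) - 1) * D) + α * ηe := by
            have := hsum.trans_eq hsum2
            have hαμ : 0 ≤ α * μ := mul_nonneg hα hμ
            nlinarith [mul_le_mul_of_nonneg_left hEm hκ,
              mul_le_mul_of_nonneg_left this hαμ]
          _ = (κ * ε (m : ℤ) + α * μ * ∑ i ∈ Finset.Icc 1 (n - 1), ε ((m : ℤ) - (i : ℤ))) * E 0
              + (c * D + α * ηe) := by rw [hc_def]; ring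
          _ = ε ((m : ℤ) + 1) * E 0 + D := by
            rw [hεstep (m : ℤ) (by positivity), hDfix]
  intro t ht
  obtain ⟨m, rfl⟩ := Int.eq_ofNat_of_zero_le ht
  exact key m (m : ℤ) le_rfl
end

section
/- (Convergence horizon for noisy Frontal Slice Descent; Theorem 4.4 of the paper made precise.) Let n ≥ 2 be an integer, let κ, μ, α, η_e be nonnegative reals with c := κ + α·μ·(n−1) < 1, and let E : ℤ → ℝ be a sequence of nonnegative reals with E(t) = E(0) for all t ≤ 0 and E(t+1) ≤ κ·E(t) + α·μ·∑_{i=1}^{n−1} E(t−i) + α·η_e for every integer t ≥ 0. Then limsup_{t→∞} E(t) ≤ α·η_e/(1 − c); in particular, when η_e = 0 the error converges to 0, and in general the error eventually enters any neighborhood of the horizon α·η_e/(1−c). -/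
open Matrix Finset Filter

theorem noisy_fsd_convergence_horizon
    (n : ℕ) (hn : 2 ≤ n) (κ μ α ηe : ℝ)
    (hκ : 0 ≤ κ) (hμ : 0 ≤ μ) (hα : 0 ≤ α) (hηe : 0 ≤ ηe)
    (hc : κ + α * μ * ((n : ℝ) - 1) < 1)
    (ε : ℤ → ℝ)
    (hε0 : ∀ t : ℤ, t ≤ 0 → ε t = 1)
    (hεrec : ∀ t : ℤ, 1 ≤ t →
      ε t = κ ^ t.toNat + α * μ * ∑ j ∈ Finset.range t.toNat, κ ^ j *
          ∑ i ∈ Finset.Icc 1 (n - 1), ε (t - 1 - (j : ℤ) - (i : ℤ)))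
    (E : ℤ → ℝ) (hEnn : ∀ t : ℤ, 0 ≤ E t) (hEneg : ∀ t : ℤ, t ≤ 0 → E t = E 0)
    (hErec : ∀ t : ℤ, 0 ≤ t →
      E (t + 1) ≤ κ * E t + α * μ * (∑ i ∈ Finset.Icc 1 (n - 1), E (t - (i : ℤ))) + α * ηe) :
    Filter.limsup (fun t : ℕ => E (t : ℤ)) Filter.atTop ≤
        α * ηe / (1 - (κ + α * μ * ((n : ℝ) - 1))) ∧
      (ηe = 0 → Filter.Tendsto (fun t : ℕ => E (t : ℤ)) Filter.atTop (nhds 0)) := by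
  have hn2 : (2 : ℝ) ≤ (n : ℝ) := by exact_mod_cast hn
  set c : ℝ := κ + α * μ * ((n : ℝ) - 1) with hcdef
  have hc0 : 0 ≤ c := by
    have : 0 ≤ α * μ * ((n : ℝ) - 1) :=
      mul_nonneg (mul_nonneg hα hμ) (by linarith)
    simp only [hcdef]; linarith
  have h1c : (0 : ℝ) < 1 - c := by linarith
  set L : ℝ := α * ηe / (1 - c) with hLdef
  have hL0 : 0 ≤ L := div_nonneg (mul_nonneg hα hηe) h1c.le
  have hLmul : (1 - c) * L = α * ηe := by
    rw [hLdef, mul_div_cancel₀ _ h1c.ne']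
  have hcard : ((Finset.Icc 1 (n - 1)).card : ℝ) = (n : ℝ) - 1 := by
    rw [Nat.card_Icc]
    have h1n : 1 ≤ n := by omega
    push_cast [Nat.sub_add_cancel h1n, Nat.cast_sub h1n]
    ring
  set M : ℝ := max (E 0) L with hMdef
  have hML : L ≤ M := le_max_right _ _
  have hcM : c * M + α * ηe ≤ M := by
    have h1 : (1 - c) * L ≤ (1 - c) * M := by
      exact mul_le_mul_of_nonneg_left hML h1c.le
    rw [hLmul] at h1
    linarith
  -- global bound
  have hM : ∀ s : ℤ, E s ≤ M := by
    have key : ∀ k : ℕ, ∀ s : ℤ, s ≤ (k : ℤ) → E s ≤ M := by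
      intro k
      induction k with
      | zero =>
        intro s hs
        rw [hEneg s (by exact_mod_cast hs)]
        exact le_max_left _ _
      | succ k ih =>
        intro s hs
        by_cases h : s ≤ (k : ℤ)
        · exact ih s h
        · have hs' : s = (k : ℤ) + 1 := by push_cast at hs ⊢; omega
          subst hs'
          have hrec := hErec (k : ℤ) (by positivity)
          have hsum : ∑ i ∈ Finset.Icc 1 (n - 1), E ((k : ℤ) - (i : ℤ)) ≤
              ((n : ℝ) - 1) * M := by
            calc ∑ i ∈ Finset.Icc 1 (n - 1), E ((k : ℤ) - (i : ℤ))
                ≤ ∑ _i ∈ Finset.Icc 1 (n - 1), M :=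
                  Finset.sum_le_sum fun i _ => ih _ (by omega)
              _ = ((Finset.Icc 1 (n - 1)).card : ℝ) * M := by
                  rw [Finset.sum_const, nsmul_eq_mul]
              _ = ((n : ℝ) - 1) * M := by rw [hcard]
          have hEk : E (k : ℤ) ≤ M := ih _ le_rfl
          have h2 : κ * E (k : ℤ) ≤ κ * M := mul_le_mul_of_nonneg_left hEk hκ
          have h3 : α * μ * (∑ i ∈ Finset.Icc 1 (n - 1), E ((k : ℤ) - (i : ℤ)))
              ≤ α * μ * (((n : ℝ) - 1) * M) :=
            mul_le_mul_of_nonneg_left hsum (mul_nonneg hα hμ)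
          have : κ * M + α * μ * (((n : ℝ) - 1) * M) + α * ηe = c * M + α * ηe := by
            simp only [hcdef]; ring
          linarith
    intro s
    rcases le_or_gt s 0 with h | h
    · rw [hEneg s h]; exact le_max_left _ _
    · exact key s.toNat s (by omega)
  have hbdd : Filter.IsBoundedUnder (· ≤ ·) Filter.atTop (fun t : ℕ => E (t : ℤ)) :=
    Filter.isBoundedUnder_of ⟨M, fun t => hM t⟩
  have hbdd' : Filter.IsBoundedUnder (· ≥ ·) Filter.atTop (fun t : ℕ => E (t : ℤ)) :=
    Filter.isBoundedUnder_of ⟨0, fun t => hEnn t⟩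
  have hcob : Filter.IsCoboundedUnder (· ≤ ·) Filter.atTop (fun t : ℕ => E (t : ℤ)) :=
    hbdd'.isCoboundedUnder_le
  set ℓ : ℝ := Filter.limsup (fun t : ℕ => E (t : ℤ)) Filter.atTop with hldef
  have hstep : ∀ δ : ℝ, 0 < δ → ℓ ≤ c * ℓ + α * ηe + δ := by
    intro δ hδ
    have hev : ∀ᶠ t : ℕ in Filter.atTop, E (t : ℤ) < ℓ + δ :=
      Filter.eventually_lt_of_limsup_lt (by linarith) hbdd
    obtain ⟨T, hT⟩ := Filter.eventually_atTop.mp hev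
    have hev2 : ∀ᶠ t : ℕ in Filter.atTop, E (t : ℤ) ≤ c * (ℓ + δ) + α * ηe := by
      rw [Filter.eventually_atTop]
      refine ⟨T + n + 1, fun t ht => ?_⟩
      set s : ℕ := t - 1 with hsdef
      have hts : (t : ℤ) = (s : ℤ) + 1 := by
        have ht1 : 1 ≤ t := by omega
        simp only [hsdef]; push_cast [Nat.sub_add_cancel ht1]; omega
      have hrec := hErec (s : ℤ) (by positivity)
      have hEs : E (s : ℤ) ≤ ℓ + δ := (hT s (by omega)).le
      have hsum : ∑ i ∈ Finset.Icc 1 (n - 1), E ((s : ℤ) - (i : ℤ)) ≤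
          ((n : ℝ) - 1) * (ℓ + δ) := by
        calc ∑ i ∈ Finset.Icc 1 (n - 1), E ((s : ℤ) - (i : ℤ))
            ≤ ∑ _i ∈ Finset.Icc 1 (n - 1), (ℓ + δ) := by
              refine Finset.sum_le_sum fun i hi => ?_
              obtain ⟨hi1, hi2⟩ := Finset.mem_Icc.mp hi
              have hsi : (s : ℤ) - (i : ℤ) = ((s - i : ℕ) : ℤ) := by
                have : i ≤ s := by omega
                push_cast [Nat.cast_sub this]; ring
              rw [hsi]
              exact (hT (s - i) (by omega)).le
          _ = ((Finset.Icc 1 (n - 1)).card : ℝ) * (ℓ + δ) := by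
              rw [Finset.sum_const, nsmul_eq_mul]
          _ = ((n : ℝ) - 1) * (ℓ + δ) := by rw [hcard]
      have h2 : κ * E (s : ℤ) ≤ κ * (ℓ + δ) := mul_le_mul_of_nonneg_left hEs hκ
      have h3 : α * μ * (∑ i ∈ Finset.Icc 1 (n - 1), E ((s : ℤ) - (i : ℤ)))
          ≤ α * μ * (((n : ℝ) - 1) * (ℓ + δ)) :=
        mul_le_mul_of_nonneg_left hsum (mul_nonneg hα hμ)
      have heq : κ * (ℓ + δ) + α * μ * (((n : ℝ) - 1) * (ℓ + δ)) + α * ηe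
          = c * (ℓ + δ) + α * ηe := by simp only [hcdef]; ring
      rw [hts]
      linarith
    have hls : ℓ ≤ c * (ℓ + δ) + α * ηe := Filter.limsup_le_of_le hcob hev2
    have hcd : c * δ ≤ δ := by nlinarith
    nlinarith
  have hfin : ℓ ≤ c * ℓ + α * ηe :=
    le_of_forall_pos_le_add fun δ hδ => by
      have := hstep δ hδ; linarith
  have hmain : ℓ ≤ L := by
    rw [hLdef, le_div_iff₀ h1c]
    nlinarith
  refine ⟨hmain, fun h0 => ?_⟩
  have hL0' : L = 0 := by rw [hLdef, h0]; simp
  have hlim0 : ℓ ≤ 0 := hL0' ▸ hmain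
  have hliminf : (0 : ℝ) ≤ Filter.liminf (fun t : ℕ => E (t : ℤ)) Filter.atTop :=
    Filter.le_liminf_of_le hbdd.isCoboundedUnder_ge (Filter.Eventually.of_forall fun t => hEnn t)
  have hls : Filter.liminf (fun t : ℕ => E (t : ℤ)) Filter.atTop ≤ ℓ :=
    Filter.liminf_le_limsup hbdd hbdd'
  exact tendsto_of_liminf_eq_limsup (le_antisymm (by linarith) hliminf)
    (le_antisymm hlim0 (by linarith)) hbdd hbdd'
end
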